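/- Let X be a sober topological space whose open set lattice is countable. Then every closed subset of X is of the form ↓F = {x : ∃ f ∈ F, x ≤ f} for some finite subset F of X, where ≤ is the specialization order; equivalently, the topology on X is the upper topology of the specialization order. -/

import Mathlib

open Set

section RelDefs
variable {α : Type*} (r : α → α → Prop)

/-- `D` is a (nonempty) directed subset with respect to the relation `r`. -/
def DirOn (D : Set α) : Prop :=
  D.Nonempty ∧ ∀ a ∈ D, ∀ b ∈ D, ∃ c ∈ D, r a c ∧ r b c

/-- `s` is a least upper bound of `D` with respect to `r`. -/
def IsLubR (D : Set α) (s : α) : Prop :=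
  (∀ d ∈ D, r d s) ∧ ∀ u, (∀ d ∈ D, r d u) → r s u

/-- `x` is way-below `y` with respect to `r`. -/
def WB (x y : α) : Prop :=
  ∀ D : Set α, DirOn r D → ∀ s, IsLubR r D s → r y s → ∃ d ∈ D, r x d

/-- Every directed subset has a least upper bound (dcpo property). -/
def DcpoRel : Prop := ∀ D : Set α, DirOn r D → ∃ s, IsLubR r D s

/-- Continuity: every element is the directed least upper bound of the elements way-below it. -/
def ContinuousRel : Prop :=
  ∀ y, DirOn r {x | WB r x y} ∧ IsLubR r {x | WB r x y} y

/-- Algebraicity: every element is the directed least upper bound of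
the compact elements (`WB r x x`) below it. -/
def AlgebraicRel : Prop :=
  ∀ y, DirOn r {x | WB r x x ∧ r x y} ∧ IsLubR r {x | WB r x x ∧ r x y} y

/-- Upper set generated by `F` with respect to `r`. -/
def UpS (F : Set α) : Set α := {x | ∃ f ∈ F, r f x}

/-- The set `F` is way-below the set `G` with respect to `r`. -/
def SetWB (F G : Set α) : Prop :=
  ∀ D : Set α, DirOn r D → ∀ s, IsLubR r D s → s ∈ UpS r G → ∃ d ∈ D, d ∈ UpS r F

/-- Finite sets way-below `x`. -/
def FinFam (x : α) : Set (Finset α) := {F | SetWB r (F : Set α) {x}}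

/-- Finite sets `F` with `F ≪ F ≪ x`. -/
def FinFamC (x : α) : Set (Finset α) :=
  {F | SetWB r (F : Set α) (F : Set α) ∧ SetWB r (F : Set α) {x}}

/-- Directedness of a family of finite sets in the Smyth preorder
(`F ⊑ G` iff `G ⊆ ↑F`). -/
def SmythDirected (S : Set (Finset α)) : Prop :=
  S.Nonempty ∧ ∀ F ∈ S, ∀ G ∈ S, ∃ H ∈ S,
    (H : Set α) ⊆ UpS r (F : Set α) ∧ (H : Set α) ⊆ UpS r (G : Set α)

/-- Quasicontinuity with respect to `r`. -/
def QuasicontinuousRel : Prop :=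
  ∀ x, SmythDirected r (FinFam r x) ∧
    UpS r {x} = ⋂ F ∈ FinFam r x, UpS r (F : Set α)

/-- Quasialgebraicity with respect to `r`. -/
def QuasialgebraicRel : Prop :=
  ∀ x, SmythDirected r (FinFamC r x) ∧
    UpS r {x} = ⋂ F ∈ FinFamC r x, UpS r (F : Set α)

/-- `U` is Scott open with respect to `r`: an upper set inaccessible by
least upper bounds of directed sets. -/
def IsScottOpenRel (U : Set α) : Prop :=
  (∀ x ∈ U, ∀ y, r x y → y ∈ U) ∧
    ∀ D : Set α, DirOn r D → ∀ s, IsLubR r D s → s ∈ U → ∃ d ∈ D, d ∈ U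

end RelDefs

section Spec
variable {X : Type*} [TopologicalSpace X]

/-- The specialization order: `x ≤ y` iff `x ∈ cl {y}`. -/
def sle (x y : X) : Prop := x ∈ closure ({y} : Set X)

/-- The maximal elements of `C` with respect to the specialization order. -/
def maxSpec (C : Set X) : Set X := {c | c ∈ C ∧ ∀ y ∈ C, sle c y → sle y c}

end Spec


section SoberAux
variable {X : Type*} [TopologicalSpace X]


lemma sle_refl'' (x : X) : sle x x := subset_closure rfl

lemma sle_trans'' {x y z : X} (h1 : sle x y) (h2 : sle y z) : sle x z :=
  closure_minimal (Set.singleton_subset_iff.mpr h2) isClosed_closure h1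

lemma sle_open'' {x y : X} (h : sle x y) {U : Set X} (hU : IsOpen U) (hx : x ∈ U) : y ∈ U := by
  obtain ⟨z, hzU, hzy⟩ := mem_closure_iff.mp h U hU hx
  rcases hzy with rfl
  exact hzU

lemma sle_antisymm'' [T0Space X] {x y : X} (h1 : sle x y) (h2 : sle y x) : x = y :=
  ((specializes_iff_mem_closure.mpr h2).antisymm (specializes_iff_mem_closure.mpr h1)).eq

lemma mem_of_sle_closed'' {C : Set X} (hC : IsClosed C) {x y : X} (h : sle x y) (hy : y ∈ C) :
    x ∈ C := closure_minimal (Set.singleton_subset_iff.mpr hy) hC h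

lemma chain_bound'' [QuasiSober X] {C : Set X} (hC : IsClosed C) {D : Set X} (hD : D ⊆ C)
    (hchain : IsChain sle D) (hne : D.Nonempty) : ∃ z ∈ C, ∀ d ∈ D, sle d z := by
  have hirr : IsIrreducible (closure D) := by
    refine ⟨hne.closure, ?_⟩
    rintro u v hu hv ⟨a, haD, hau⟩ ⟨b, hbD, hbv⟩
    obtain ⟨d1, hd1u, hd1D⟩ := mem_closure_iff.mp haD u hu hau
    obtain ⟨d2, hd2v, hd2D⟩ := mem_closure_iff.mp hbD v hv hbv
    by_cases hdd : d1 = d2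
    · exact ⟨d1, subset_closure hd1D, hd1u, hdd ▸ hd2v⟩
    · rcases hchain hd1D hd2D hdd with h | h
      · exact ⟨d2, subset_closure hd2D, sle_open'' h hu hd1u, hd2v⟩
      · exact ⟨d1, subset_closure hd1D, hd1u, sle_open'' h hv hd2v⟩
  obtain ⟨z, hz⟩ := QuasiSober.sober hirr isClosed_closure
  have hzD : z ∈ closure D := by rw [← hz]; exact subset_closure rfl
  refine ⟨z, (closure_minimal hD hC) hzD, fun d hd => ?_⟩
  have hdc : d ∈ closure D := subset_closure hd
  rw [← hz] at hdc
  exact hdc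

lemma exists_max'' [T0Space X] [QuasiSober X] {C : Set X} (hC : IsClosed C) {x : X} (hx : x ∈ C) :
    ∃ m ∈ maxSpec C, sle x m := by
  set S : Set (Set X) := (fun y => closure ({y} : Set X)) '' {y | y ∈ C ∧ sle x y} with hS
  have hchainub : ∀ c ⊆ S, IsChain (· ⊆ ·) c → c.Nonempty → ∃ ub ∈ S, ∀ s ∈ c, s ⊆ ub := by
    intro c hcS hchain hcne
    set D : Set X := {y | (y ∈ C ∧ sle x y) ∧ closure ({y} : Set X) ∈ c} with hD
    have hDC : D ⊆ C := fun y hy => hy.1.1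
    have hDchain : IsChain sle D := by
      intro a ha b hb _
      by_cases hcl : closure ({a} : Set X) = closure ({b} : Set X)
      · exact Or.inl (show a ∈ closure ({b} : Set X) by rw [← hcl]; exact sle_refl'' a)
      · rcases hchain ha.2 hb.2 hcl with h | h
        · exact Or.inl (h (sle_refl'' a))
        · exact Or.inr (h (sle_refl'' b))
    obtain ⟨s, hsc⟩ := hcne
    obtain ⟨y0, hy0, hy0eq'⟩ := hcS hsc
    have hy0eq : closure ({y0} : Set X) = s := hy0eq'
    have hy0D : y0 ∈ D := ⟨hy0, by rw [hy0eq]; exact hsc⟩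
    obtain ⟨z, hzC, hub⟩ := chain_bound'' hC hDC hDchain ⟨y0, hy0D⟩
    refine ⟨closure {z}, ⟨z, ⟨hzC, sle_trans'' hy0.2 (hub y0 hy0D)⟩, rfl⟩, ?_⟩
    intro t ht
    obtain ⟨w, hw, hweq'⟩ := hcS ht
    have hweq : closure ({w} : Set X) = t := hweq'
    have hwD : w ∈ D := ⟨hw, by rw [hweq]; exact ht⟩
    rw [← hweq]
    exact closure_minimal (Set.singleton_subset_iff.mpr (hub w hwD)) isClosed_closure
  have hxS : closure ({x} : Set X) ∈ S := ⟨x, ⟨hx, sle_refl'' x⟩, rfl⟩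
  obtain ⟨m', hsub, hmax⟩ := zorn_subset_nonempty S hchainub _ hxS
  obtain ⟨m, hm, hmeq'⟩ := hmax.1
  have hmeq : closure ({m} : Set X) = m' := hmeq'
  refine ⟨m, ⟨hm.1, ?_⟩, ?_⟩
  · intro w hw hmw
    have hwS : closure ({w} : Set X) ∈ S := ⟨w, ⟨hw, sle_trans'' hm.2 hmw⟩, rfl⟩
    have hsub2 : m' ⊆ closure ({w} : Set X) := by
      rw [← hmeq]
      exact closure_minimal (Set.singleton_subset_iff.mpr hmw) isClosed_closure
    have hback := hmax.2 hwS hsub2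
    rw [← hmeq] at hback
    exact hback (sle_refl'' w)
  · have : x ∈ closure ({m} : Set X) := by
      rw [hmeq]
      exact hsub (sle_refl'' x)
    exact this

lemma maxSpec_antichain'' [T0Space X] {C : Set X} {a b : X} (ha : a ∈ maxSpec C)
    (hb : b ∈ maxSpec C) (hab : sle a b) : a = b :=
  sle_antisymm'' hab (ha.2 b hb.1 hab)

lemma mem_closure_finite'' {F : Set X} (hF : F.Finite) {x : X} (hx : x ∈ closure F) :
    ∃ f ∈ F, sle x f := by
  revert x
  refine Set.Finite.induction_on (motive := fun s _ => ∀ {x : X}, x ∈ closure s → ∃ f ∈ s, sle x f)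
    F hF (by simp) ?_
  intro a s _ _ ih x hx
  rw [Set.insert_eq, closure_union] at hx
  rcases hx with hx | hx
  · exact ⟨a, Set.mem_insert a s, hx⟩
  · obtain ⟨f, hf, hsle⟩ := ih hx
    exact ⟨f, Set.mem_insert_of_mem a hf, hsle⟩


end SoberAux

lemma diag_refine' (p : ℕ → ℕ → Prop) :
    ∃ T : ℕ → Set ℕ, (∀ k, (T k).Infinite) ∧ (∀ k j, k ≤ j → T j ⊆ T k) ∧
      ∀ k, (∀ n ∈ T (k+1), p k n) ∨ (∀ n ∈ T (k+1), ¬ p k n) := by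
  classical
  set T : ℕ → Set ℕ := fun k => Nat.rec Set.univ (fun k Tk =>
    if {n | n ∈ Tk ∧ p k n}.Infinite then {n | n ∈ Tk ∧ p k n} else Tk \ {n | p k n}) k with hT
  have hTsucc : ∀ k, T (k+1) = if {n | n ∈ T k ∧ p k n}.Infinite then {n | n ∈ T k ∧ p k n}
      else T k \ {n | p k n} := fun k => rfl
  have hTinf : ∀ k, (T k).Infinite := by
    intro k
    induction k with
    | zero => exact Set.infinite_univ
    | succ k ih =>
      rw [hTsucc k]
      split_ifs with h
      · exact h
      · have hfin : ({n | n ∈ T k ∧ p k n}).Finite := Set.not_infinite.mp h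
        have : T k \ {n | p k n} = T k \ {n | n ∈ T k ∧ p k n} := by
          ext m; simp only [Set.mem_diff, Set.mem_setOf_eq]; tauto
        rw [this]
        exact ih.diff hfin
  have hTsub : ∀ k, T (k+1) ⊆ T k := by
    intro k
    rw [hTsucc k]
    split_ifs with h
    · exact fun n hn => hn.1
    · exact Set.diff_subset
  refine ⟨T, hTinf, ?_, ?_⟩
  · intro k j hkj
    induction j, hkj using Nat.le_induction with
    | base => exact subset_rfl
    | succ j hj ih => exact (hTsub j).trans ih
  · intro k
    rw [hTsucc k]
    split_ifs with h
    · exact Or.inl fun n hn => hn.2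
    · exact Or.inr fun n hn => hn.2

lemma exists_strictMono_mem' {P : ℕ → Set ℕ} (h : ∀ j b, ∃ m, m ∈ P j ∧ b < m) :
    ∃ φ : ℕ → ℕ, StrictMono φ ∧ ∀ j, φ j ∈ P j := by
  classical
  choose f hf1 hf2 using h
  refine ⟨fun j => Nat.rec (f 0 0) (fun j pj => f (j+1) pj) j,
    strictMono_nat_of_lt_succ (fun j => hf2 _ _), fun j => ?_⟩
  cases j with
  | zero => exact hf1 0 0
  | succ j => exact hf1 _ _

lemma closed_countable'' {X : Type*} [TopologicalSpace X]
    (hcnt : {U : Set X | IsOpen U}.Countable) : {D : Set X | IsClosed D}.Countable := by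
  refine (hcnt.image (fun U => Uᶜ)).mono ?_
  intro D hD
  exact ⟨Dᶜ, hD.isOpen_compl, compl_compl D⟩

lemma maxSpec_finite'' {X : Type*} [TopologicalSpace X] [T0Space X] [QuasiSober X]
    (hcnt : {U : Set X | IsOpen U}.Countable) {C : Set X} (hC : IsClosed C) :
    (maxSpec C).Finite := by
  classical
  by_contra hfin
  have hinf : (maxSpec C).Infinite := hfin
  set emb : ℕ ↪ (maxSpec C) := Set.Infinite.natEmbedding _ hinf with hemb
  set x : ℕ → X := fun n => (emb n : X) with hxdef
  have hxmax : ∀ n, x n ∈ maxSpec C := fun n => (emb n).2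
  have hxinj : Function.Injective x := fun a b hab => emb.injective (Subtype.ext hab)
  -- enumerate opens
  obtain ⟨e, he⟩ := hcnt.exists_eq_range ⟨∅, isOpen_empty⟩
  have hoe : ∀ k, IsOpen (e k) := by
    intro k
    have : e k ∈ {U : Set X | IsOpen U} := by rw [he]; exact Set.mem_range_self k
    exact this
  -- diagonalization
  obtain ⟨T, hTinf, hTle, hTdich⟩ := diag_refine' (fun k n => x n ∈ e k)
  obtain ⟨φ, hφmono, hφmem⟩ := exists_strictMono_mem' (P := T)
    (fun j b => by obtain ⟨m, hm, hb⟩ := (hTinf j).exists_gt b; exact ⟨m, hm, hb⟩)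
  set y : ℕ → X := fun j => x (φ j) with hydef
  have hyinj : Function.Injective y := hxinj.comp hφmono.injective
  have hymax : ∀ j, y j ∈ maxSpec C := fun j => hxmax (φ j)
  have hdich : ∀ U : Set X, IsOpen U → (∃ K, ∀ j ≥ K, y j ∈ U) ∨ (∃ K, ∀ j ≥ K, y j ∉ U) := by
    intro U hU
    have : U ∈ Set.range e := by rw [← he]; exact hU
    obtain ⟨k, rfl⟩ := this
    rcases hTdich k with h | h
    · exact Or.inl ⟨k+1, fun j hj => h (φ j) (hTle (k+1) j hj (hφmem j))⟩
    · exact Or.inr ⟨k+1, fun j hj => h (φ j) (hTle (k+1) j hj (hφmem j))⟩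
  set A : ℕ → Set X := fun n => closure (y '' Set.Ici n) with hA
  by_cases hScase : ({n | y n ∉ A (n+1)}).Infinite
  · -- Case 1: Cantor-style contradiction
    obtain ⟨ψ, hψmono, hψS⟩ := exists_strictMono_mem' (P := fun _ => {n | y n ∉ A (n+1)})
      (fun j b => by obtain ⟨m, hm, hb⟩ := hScase.exists_gt b; exact ⟨m, hm, hb⟩)
    set Cl : Set ℕ → Set X := fun SS => closure (y '' (ψ '' SS)) with hCl
    have hmemiff : ∀ (SS : Set ℕ) (i : ℕ), y (ψ i) ∈ Cl SS ↔ i ∈ SS := by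
      intro SS i
      constructor
      · intro hmem
        by_contra hiSS
        have hSS : SS = (SS ∩ Set.Iio i) ∪ (SS ∩ Set.Ioi i) := by
          ext j
          simp only [Set.mem_union, Set.mem_inter_iff, Set.mem_Iio, Set.mem_Ioi]
          constructor
          · intro hj
            rcases lt_trichotomy j i with h | h | h
            · exact Or.inl ⟨hj, h⟩
            · exact absurd (h ▸ hj) hiSS
            · exact Or.inr ⟨hj, h⟩
          · rintro (⟨h, _⟩ | ⟨h, _⟩) <;> exact h
        simp only [hCl] at hmem
        rw [hSS, Set.image_union, Set.image_union, closure_union] at hmem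
        rcases hmem with hmem | hmem
        · -- finite low part
          have hfin : ((y '' (ψ '' (SS ∩ Set.Iio i)))).Finite :=
            (((Set.finite_Iio i).subset Set.inter_subset_right).image ψ).image y
          obtain ⟨f, hf, hsle⟩ := mem_closure_finite'' hfin hmem
          obtain ⟨_, ⟨j, hj, rfl⟩, rfl⟩ := hf
          have : y (ψ i) = y (ψ j) := maxSpec_antichain'' (hymax _) (hymax _) hsle
          have hij : i = j := hψmono.injective (hyinj this)
          have hji : j < i := hj.2
          omega
        · -- high part
          have hsub : y '' (ψ '' (SS ∩ Set.Ioi i)) ⊆ y '' Set.Ici (ψ i + 1) := by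
            rintro _ ⟨_, ⟨j, ⟨_, hji⟩, rfl⟩, rfl⟩
            exact ⟨ψ j, Nat.succ_le_of_lt (hψmono hji), rfl⟩
          have : y (ψ i) ∈ A (ψ i + 1) := closure_mono hsub hmem
          exact (hψS i) this
      · intro h
        exact subset_closure (Set.mem_image_of_mem y (Set.mem_image_of_mem ψ h))
    have hClinj : Function.Injective Cl := by
      intro SS SS' hEq
      ext i
      rw [← hmemiff SS i, hEq, hmemiff SS' i]
    have hrange : (Set.range Cl).Countable :=
      (closed_countable'' hcnt).mono (by rintro _ ⟨SS, rfl⟩; exact isClosed_closure)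
    haveI : Countable (Set.range Cl) := hrange.to_subtype
    haveI : Countable (Set ℕ) := Countable.of_equiv _ (Equiv.ofInjective Cl hClinj).symm
    obtain ⟨f, hf⟩ := exists_injective_nat (Set ℕ)
    exact Function.cantor_injective f hf
  · -- Case 2: tail closures stabilize; irreducible, generic point kills maximality
    have hSfin : ({n | y n ∉ A (n+1)}).Finite := Set.not_infinite.mp hScase
    obtain ⟨b, hb⟩ := hSfin.bddAbove
    set N := b + 1 with hN
    have hNy : ∀ n, N ≤ n → y n ∈ A (n+1) := by
      intro n hn
      by_contra hmem
      have : n ≤ b := hb hmem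
      omega
    have hAstep : ∀ n, N ≤ n → A n = A (n+1) := by
      intro n hn
      have hIci : Set.Ici n = insert n (Set.Ici (n+1)) := by
        ext j
        simp only [Set.mem_Ici, Set.mem_insert_iff]
        omega
      show closure (y '' Set.Ici n) = closure (y '' Set.Ici (n+1))
      rw [hIci, Set.image_insert_eq, Set.insert_eq, closure_union]
      have hsub : closure ({y n} : Set X) ⊆ closure (y '' Set.Ici (n+1)) :=
        closure_minimal (Set.singleton_subset_iff.mpr (hNy n hn)) isClosed_closure
      exact Set.union_eq_self_of_subset_left hsub
    have hAeq : ∀ n, N ≤ n → A N = A n := by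
      intro n hn
      induction n, hn using Nat.le_induction with
      | base => rfl
      | succ n hn ih => rw [ih, hAstep n hn]
    have hmeet : ∀ u : Set X, IsOpen u → (A N ∩ u).Nonempty → ∃ K, ∀ j ≥ K, y j ∈ u := by
      rintro u hu ⟨a, haA, hau⟩
      rcases hdich u hu with h | ⟨K, hK⟩
      · exact h
      · exfalso
        have haA' : a ∈ A (max N K) := by
          rw [← hAeq (max N K) (le_max_left _ _)]
          exact haA
        have haA'' : a ∈ closure (y '' Set.Ici (max N K)) := haA'
        obtain ⟨w, hwu, ⟨j, hj, rfl⟩⟩ := mem_closure_iff.mp haA'' u hu hau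
        exact hK j (le_trans (le_max_right _ _) hj) hwu
    have hirr : IsIrreducible (A N) := by
      refine ⟨⟨y N, subset_closure ⟨N, le_refl N, rfl⟩⟩, ?_⟩
      intro u v hu hv hAu hAv
      obtain ⟨K1, h1⟩ := hmeet u hu hAu
      obtain ⟨K2, h2⟩ := hmeet v hv hAv
      refine ⟨y (max N (max K1 K2)), subset_closure ⟨max N (max K1 K2), Set.mem_Ici.mpr (le_max_left _ _), rfl⟩,
        h1 _ ?_, h2 _ ?_⟩
      · exact le_trans (le_max_left K1 K2) (le_max_right _ _)
      · exact le_trans (le_max_right K1 K2) (le_max_right _ _)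
    obtain ⟨z, hz⟩ := QuasiSober.sober hirr isClosed_closure
    have hsubC : A N ⊆ C := closure_minimal (by rintro _ ⟨j, _, rfl⟩; exact (hymax j).1) hC
    have hzC : z ∈ C := hsubC (by rw [← hz]; exact subset_closure rfl)
    have hNz : sle (y N) z := by
      have hmem : y N ∈ A N := subset_closure ⟨N, le_refl N, rfl⟩
      rw [← hz] at hmem
      exact hmem
    have hN1z : sle (y (N+1)) z := by
      have hmem : y (N+1) ∈ A N := subset_closure ⟨N+1, Nat.le_succ N, rfl⟩
      rw [← hz] at hmem
      exact hmem
    have hzN : sle z (y N) := (hymax N).2 z hzC hNz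
    have heq : y (N+1) = y N := maxSpec_antichain'' (hymax (N+1)) (hymax N)
      (sle_trans'' hN1z hzN)
    exact absurd (hyinj heq) (Nat.succ_ne_self N)

/-- If `X` is sober with countable open set lattice, then every closed
set is `↓F` for a finite `F`, and the topology is the upper topology of the
specialization order. -/
theorem stmt2 {X : Type*} [TopologicalSpace X] [T0Space X] [QuasiSober X]
    (hcnt : {U : Set X | IsOpen U}.Countable) :
    (∀ C : Set X, IsClosed C → ∃ F : Finset X, C = {x | ∃ f ∈ F, sle x f}) ∧
      ‹TopologicalSpace X› =
        TopologicalSpace.generateFrom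
          {s : Set X | ∃ F : Finset X, s = {x | ∃ f ∈ F, sle x f}ᶜ} := by
  classical
  have part1 : ∀ C : Set X, IsClosed C → ∃ F : Finset X, C = {x | ∃ f ∈ F, sle x f} := by
    intro C hC
    have hfin := maxSpec_finite'' hcnt hC
    refine ⟨hfin.toFinset, ?_⟩
    ext w
    constructor
    · intro hw
      obtain ⟨m, hm, hsle⟩ := exists_max'' hC hw
      exact ⟨m, hfin.mem_toFinset.mpr hm, hsle⟩
    · rintro ⟨f, hf, hsle⟩
      exact mem_of_sle_closed'' hC hsle (hfin.mem_toFinset.mp hf).1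
  refine ⟨part1, ?_⟩
  have hclosedF : ∀ F : Finset X, IsClosed {x : X | ∃ f ∈ F, sle x f} := by
    intro F
    have heq : {x : X | ∃ f ∈ F, sle x f} = ⋃ f ∈ (F : Set X), closure {f} := by
      ext w
      simp only [Set.mem_setOf_eq, Set.mem_iUnion, Finset.mem_coe, exists_prop]
      rfl
    rw [heq]
    exact Set.Finite.isClosed_biUnion F.finite_toSet (fun f _ => isClosed_closure)
  apply le_antisymm
  · exact le_generateFrom (by rintro s ⟨F, rfl⟩; exact (hclosedF F).isOpen_compl)
  · rw [TopologicalSpace.le_def]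
    intro U hU
    obtain ⟨F, hF⟩ := part1 Uᶜ (isClosed_compl_iff.mpr hU)
    have hUeq : U = {x | ∃ f ∈ F, sle x f}ᶜ := by rw [← hF, compl_compl]
    rw [hUeq]
    exact TopologicalSpace.GenerateOpen.basic _ ⟨F, rfl⟩
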